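/- Let τ ⊆ ℕ be an infinite set. Then the set U_τ(T,E) of generalized harmonic functions f such that {ω_n(f) : n ∈ τ} is dense in L^0(∂T,E) is a dense G_δ subset of H(T,E) (with the topology on H(T,E) induced from the product topology on E^T). -/

import Mathlib

open MeasureTheory Filter Topology

/-- A rooted tree with finite levels `T n`, a singleton root level, a parent map,
and at least two children for every vertex. -/
structure TreeData where
  T : ℕ → Type
  fint : ∀ n, Fintype (T n)
  rootSubsingleton : ∀ x y : T 0, x = y
  rootNonempty : Nonempty (T 0)
  par : ∀ n, T (n + 1) → T n
  twoChildren : ∀ n (x : T n), 2 ≤ Nat.card {y : T (n + 1) // par n y = x}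

instance (D : TreeData) (n : ℕ) : Fintype (D.T n) := D.fint n

noncomputable instance (D : TreeData) (n : ℕ) (x : D.T n) :
    Fintype {y : D.T (n + 1) // D.par n y = x} := by
  classical exact Subtype.fintype _

/-- The set of vertices of the tree. -/
def TreeData.Vert (D : TreeData) : Type := Σ n, D.T n

/-- The boundary `∂T` : infinite geodesics starting at the root. -/
def TreeData.Boundary (D : TreeData) : Type :=
  {e : ∀ n, D.T n // ∀ n, D.par n (e (n + 1)) = e n}

/-- The boundary sector `B_x` of geodesics through `x`. -/
def TreeData.sector (D : TreeData) (n : ℕ) (x : D.T n) : Set D.Boundary :=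
  {e | e.1 n = x}

/-- The σ-algebra `M_m` generated by the sectors at level `m`. -/
def TreeData.levelMS (D : TreeData) (m : ℕ) : MeasurableSpace D.Boundary :=
  MeasurableSpace.generateFrom {s | ∃ x : D.T m, s = D.sector m x}

/-- The σ-algebra `M` generated by all boundary sectors. -/
instance TreeData.boundaryMS (D : TreeData) : MeasurableSpace D.Boundary :=
  MeasurableSpace.generateFrom {s | ∃ n, ∃ x : D.T n, s = D.sector n x}

/-- The probability `∏_{j<n} q(y_j, y_{j+1})` of the path from the root to a vertex. -/
def TreeData.pathProb (D : TreeData) (q : ∀ n, D.T (n + 1) → ℝ) :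
    ∀ n, D.T n → ℝ
  | 0, _ => 1
  | n + 1, y => D.pathProb q n (D.par n y) * q n y

/-- `f : T → E` is generalized harmonic: `f x = ∑_{y ∈ S x} w x y • f y`. -/
def TreeData.Harmonic (D : TreeData) {𝔽 E : Type} [Field 𝔽] [AddCommGroup E]
    [Module 𝔽 E] (w : ∀ n, D.T (n + 1) → 𝔽) (f : D.Vert → E) : Prop :=
  ∀ n (x : D.T n),
    f ⟨n, x⟩ = ∑ y : {y : D.T (n + 1) // D.par n y = x}, w n y.1 • f ⟨n + 1, y.1⟩

/-- The set `H(T,E)` of generalized harmonic functions. -/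
def TreeData.harmonicSet (D : TreeData) {𝔽 : Type} (E : Type) [Field 𝔽] [AddCommGroup E]
    [Module 𝔽 E] (w : ∀ n, D.T (n + 1) → 𝔽) : Set (D.Vert → E) :=
  {f | D.Harmonic w f}

/-- `ω_n(f) : ∂T → E`. -/
def TreeData.omegaMap (D : TreeData) {E : Type} (f : D.Vert → E) (n : ℕ)
    (e : D.Boundary) : E := f ⟨n, e.1 n⟩

/-- The pseudometric of convergence in probability associated to a distance `ρ`. -/
noncomputable def TreeData.dPgen (D : TreeData) (P : Measure D.Boundary) {α : Type}
    (ρ : α → α → ℝ) (h g : D.Boundary → α) : ℝ :=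
  ∫ e, ρ (h e) (g e) / (1 + ρ (h e) (g e)) ∂P

/-- The metric `d_ℙ` of convergence in probability on `L⁰(∂T, E)`. -/
noncomputable def TreeData.dP (D : TreeData) (P : Measure D.Boundary) {E : Type}
    [MetricSpace E] (h g : D.Boundary → E) : ℝ :=
  D.dPgen P dist h g

/-- The translation invariant metric `d̃` on `E ^ ℕ` inducing the product topology. -/
noncomputable def dTilde {E : Type} [MetricSpace E] (x y : ℕ → E) : ℝ :=
  ∑' n : ℕ, (1 / 2 : ℝ) ^ n * (dist (x n) (y n) / (1 + dist (x n) (y n)))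

/-- Lower density of a set of natural numbers. -/
noncomputable def lowerDensity (A : Set ℕ) : ℝ :=
  Filter.liminf (fun N : ℕ => ((A ∩ Set.Iio N).ncard : ℝ) / N) Filter.atTop

/-- Upper density of a set of natural numbers. -/
noncomputable def upperDensity (A : Set ℕ) : ℝ :=
  Filter.limsup (fun N : ℕ => ((A ∩ Set.Iio N).ncard : ℝ) / N) Filter.atTop

/-- `f ∈ U_τ(T,E)` : the family `(ω_n f)_{n ∈ τ}` is dense in `L⁰(∂T,E)`. -/
def TreeData.UnivOn (D : TreeData) (P : Measure D.Boundary) {E : Type}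
    [MetricSpace E] [MeasurableSpace E] (τ : Set ℕ) (f : D.Vert → E) : Prop :=
  ∀ h : D.Boundary → E, Measurable h → ∀ ε > 0, ∃ n ∈ τ, D.dP P (D.omegaMap f n) h < ε

/-- `f ∈ U_FM(T,E)` : for every nonempty open subset `V` of `L⁰(∂T,E)` (equivalently,
every ball) the set `{n | ω_n f ∈ V}` has strictly positive lower density. -/
def TreeData.FreqUniv (D : TreeData) (P : Measure D.Boundary) {E : Type}
    [MetricSpace E] [MeasurableSpace E] (f : D.Vert → E) : Prop :=
  ∀ h : D.Boundary → E, Measurable h → ∀ ε > 0,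
    0 < lowerDensity {n | D.dP P (D.omegaMap f n) h < ε}

/-- `f ∈ U_FM^τ(T,E)` for `τ` enumerated by `ns`. -/
def TreeData.FreqUnivAlong (D : TreeData) (P : Measure D.Boundary) {E : Type}
    [MetricSpace E] [MeasurableSpace E] (ns : ℕ → ℕ) (f : D.Vert → E) : Prop :=
  ∀ h : D.Boundary → E, Measurable h → ∀ ε > 0,
    0 < lowerDensity {k | D.dP P (D.omegaMap f (ns k)) h < ε}

/-- `f ∈ X(T,E)` : for every nonempty open subset `V` of `L⁰(∂T,E)` (equivalently,
every ball) the set `{n | ω_n f ∈ V}` has upper density `1`. -/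
def TreeData.UpperUniv (D : TreeData) (P : Measure D.Boundary) {E : Type}
    [MetricSpace E] [MeasurableSpace E] (f : D.Vert → E) : Prop :=
  ∀ h : D.Boundary → E, Measurable h → ∀ ε > 0,
    upperDensity {n | D.dP P (D.omegaMap f n) h < ε} = 1

/-- `f ∈ U_FM(T, E^ℕ)` where `E^ℕ` carries the metric `d̃`. -/
def TreeData.FreqUnivPi (D : TreeData) (P : Measure D.Boundary) {E : Type}
    [MetricSpace E] [MeasurableSpace E] (f : D.Vert → (ℕ → E)) : Prop :=
  ∀ h : D.Boundary → (ℕ → E), Measurable h → ∀ ε > 0,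
    0 < lowerDensity {n | D.dPgen P dTilde (D.omegaMap f n) h < ε}

variable {𝔽 E : Type} [Field 𝔽] [TopologicalSpace 𝔽] [T2Space 𝔽]
  [TopologicalSpace.SeparableSpace 𝔽] [ContinuousAdd 𝔽] [ContinuousInv₀ 𝔽]
  [AddCommGroup E] [Module 𝔽 E] [MetricSpace E]
  [TopologicalSpace.SeparableSpace E] [ContinuousAdd E] [ContinuousSMul 𝔽 E]
  [MeasurableSpace E] [BorelSpace E]
namespace TreeData
variable {D : TreeData}

instance (n : ℕ) : MeasurableSpace (D.T n) := ⊤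

instance child_nonempty (n : ℕ) (x : D.T n) : Nonempty {y : D.T (n+1) // D.par n y = x} :=
  (Nat.card_pos_iff.mp (by have := D.twoChildren n x; omega)).1

instance instTNonempty : ∀ n, Nonempty (D.T n)
  | 0 => D.rootNonempty
  | n+1 => by
      have : Nonempty (D.T n) := instTNonempty n
      exact (child_nonempty n (Classical.arbitrary (D.T n))).elim fun y => ⟨y.1⟩

/-- cast between tree levels -/
def cT (D : TreeData) {a b : ℕ} (h : a = b) (x : D.T a) : D.T b := h ▸ x

@[simp] lemma cT_rfl {a : ℕ} (h : a = a) (x : D.T a) : D.cT h x = x := rfl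

lemma cT_cT {a b c : ℕ} (h1 : a = b) (h2 : b = c) (x : D.T a) :
    D.cT h2 (D.cT h1 x) = D.cT (h1.trans h2) x := by subst h1; subst h2; rfl

/-- iterated parent map -/
def projk (D : TreeData) (j : ℕ) : ∀ k, D.T (j + k) → D.T j
  | 0, x => x
  | k+1, x => D.projk j k (D.par (j+k) x)

@[simp] lemma projk_zero (j : ℕ) (x : D.T j) : D.projk j 0 x = x := rfl

lemma projk_succ (j k : ℕ) (x : D.T (j + (k+1))) :
    D.projk j (k+1) x = D.projk j k (D.par (j+k) x) := rfl

lemma boundary_projk (e : D.Boundary) (j : ℕ) : ∀ k, D.projk j k (e.1 (j+k)) = e.1 j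
  | 0 => rfl
  | k+1 => by
      have h := e.2 (j+k)
      show D.projk j k (D.par (j+k) (e.1 (j+k+1))) = e.1 j
      rw [h]; exact boundary_projk e j k

lemma cT_boundary (e : D.Boundary) {a b : ℕ} (h : a = b) : D.cT h (e.1 a) = e.1 b := by
  subst h; rfl

end TreeData
namespace TreeData
variable {D : TreeData}

lemma exists_small_child (q : ∀ n, D.T (n + 1) → ℝ)
    (hq1 : ∀ n (x : D.T n), ∑ y : {y : D.T (n + 1) // D.par n y = x}, q n y.1 = 1)
    (n : ℕ) (x : D.T n) : ∃ y : {y : D.T (n+1) // D.par n y = x}, q n y.1 ≤ 1/2 := by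
  by_contra hno
  push_neg at hno
  have hcard : 2 ≤ Fintype.card {y : D.T (n+1) // D.par n y = x} := by
    have := D.twoChildren n x
    rwa [Nat.card_eq_fintype_card] at this
  have hne : (Finset.univ : Finset {y : D.T (n+1) // D.par n y = x}).Nonempty := by
    rw [Finset.univ_nonempty_iff]
    exact child_nonempty n x
  have hlt : ∑ y : {y : D.T (n+1) // D.par n y = x}, (1/2 : ℝ)
      < ∑ y : {y : D.T (n+1) // D.par n y = x}, q n y.1 :=
    Finset.sum_lt_sum_of_nonempty hne (fun y _ => hno y)
  have hsum : ∑ y : {y : D.T (n+1) // D.par n y = x}, (1/2 : ℝ)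
      = (Fintype.card {y : D.T (n+1) // D.par n y = x} : ℝ) * (1/2) := by
    rw [Finset.sum_const, Finset.card_univ, nsmul_eq_mul]
  have hc : (2 : ℝ) ≤ (Fintype.card {y : D.T (n+1) // D.par n y = x} : ℝ) := by
    exact_mod_cast hcard
  rw [hq1 n x, hsum] at hlt
  nlinarith

noncomputable def sacChild (q : ∀ n, D.T (n + 1) → ℝ) (n : ℕ) (x : D.T n) : D.T (n+1) :=
  if h : ∃ y : {y : D.T (n+1) // D.par n y = x}, q n y.1 ≤ 1/2 then h.choose.1
  else (Classical.arbitrary {y : D.T (n+1) // D.par n y = x}).1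

lemma par_sacChild (q : ∀ n, D.T (n + 1) → ℝ) (n : ℕ) (x : D.T n) :
    D.par n (sacChild q n x) = x := by
  unfold sacChild
  by_cases h : ∃ y : {y : D.T (n+1) // D.par n y = x}, q n y.1 ≤ 1/2
  · rw [dif_pos h]; exact h.choose.2
  · rw [dif_neg h]; exact (Classical.arbitrary {y : D.T (n+1) // D.par n y = x}).2

lemma q_sacChild (q : ∀ n, D.T (n + 1) → ℝ)
    (hq1 : ∀ n (x : D.T n), ∑ y : {y : D.T (n + 1) // D.par n y = x}, q n y.1 = 1)
    (n : ℕ) (x : D.T n) : q n (sacChild q n x) ≤ 1/2 := by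
  unfold sacChild
  rw [dif_pos (exists_small_child q hq1 n x)]
  exact (exists_small_child q hq1 n x).choose_spec

noncomputable def sacPath (q : ∀ n, D.T (n + 1) → ℝ) (N : ℕ) : ∀ k, D.T N → D.T (N + k)
  | 0, x => x
  | k+1, x => sacChild q (N+k) (sacPath q N k x)

@[simp] lemma sacPath_zero (q) (N : ℕ) (x : D.T N) : sacPath (D := D) q N 0 x = x := rfl

lemma projk_sacPath (q) (N : ℕ) : ∀ k (x : D.T N), D.projk N k (sacPath q N k x) = x
  | 0, x => rfl
  | k+1, x => by
      show D.projk N k (D.par (N+k) (sacChild q (N+k) (sacPath q N k x))) = x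
      rw [par_sacChild]
      exact projk_sacPath q N k x

lemma pathProb_nonneg (q : ∀ n, D.T (n + 1) → ℝ) (hq0 : ∀ n y, 0 < q n y) :
    ∀ n (x : D.T n), 0 ≤ D.pathProb q n x
  | 0, x => by simp [pathProb]
  | n+1, x => by
      have h1 := pathProb_nonneg q hq0 n (D.par n x)
      have h2 := (hq0 n x).le
      show 0 ≤ D.pathProb q n (D.par n x) * q n x
      positivity

lemma pathProb_sacPath (q : ∀ n, D.T (n + 1) → ℝ) (hq0 : ∀ n y, 0 < q n y)
    (hq1 : ∀ n (x : D.T n), ∑ y : {y : D.T (n + 1) // D.par n y = x}, q n y.1 = 1)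
    (N : ℕ) : ∀ k (x : D.T N),
      D.pathProb q (N+k) (sacPath q N k x) ≤ D.pathProb q N x * (1/2)^k
  | 0, x => by simp
  | k+1, x => by
      have IH := pathProb_sacPath q hq0 hq1 N k x
      have hq : q (N+k) (sacChild q (N+k) (sacPath q N k x)) ≤ 1/2 := q_sacChild q hq1 _ _
      have hq' : 0 < q (N+k) (sacChild q (N+k) (sacPath q N k x)) := hq0 _ _
      have hnn : 0 ≤ D.pathProb q (N+k) (sacPath q N k x) := pathProb_nonneg q hq0 _ _
      have hnn2 : 0 ≤ D.pathProb q N x := pathProb_nonneg q hq0 _ _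
      show D.pathProb q (N+k) (D.par (N+k) (sacChild q (N+k) (sacPath q N k x)))
          * q (N+k) (sacChild q (N+k) (sacPath q N k x)) ≤ D.pathProb q N x * (1/2)^(k+1)
      rw [par_sacChild]
      calc D.pathProb q (N+k) (sacPath q N k x) * q (N+k) (sacChild q (N+k) (sacPath q N k x))
          ≤ (D.pathProb q N x * (1/2)^k) * (1/2) := by
            apply mul_le_mul IH hq hq'.le (by positivity)
        _ = D.pathProb q N x * (1/2)^(k+1) := by ring

lemma sum_pathProb (q : ∀ n, D.T (n + 1) → ℝ)
    (hq1 : ∀ n (x : D.T n), ∑ y : {y : D.T (n + 1) // D.par n y = x}, q n y.1 = 1) :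
    ∀ n, ∑ x : D.T n, D.pathProb q n x = 1
  | 0 => by
      rcases D.rootNonempty with ⟨x0⟩
      have hcard : Fintype.card (D.T 0) = 1 :=
        Fintype.card_eq_one_iff.mpr ⟨x0, fun y => D.rootSubsingleton y x0⟩
      have : ∀ x : D.T 0, D.pathProb q 0 x = 1 := fun x => rfl
      rw [Finset.sum_congr rfl (fun x _ => this x), Finset.sum_const, Finset.card_univ,
        hcard, one_smul]
  | n+1 => by
      classical
      rw [← Fintype.sum_fiberwise (D.par n) (fun y => D.pathProb q (n+1) y)]
      have : ∀ x : D.T n, ∑ y : {y : D.T (n+1) // D.par n y = x}, D.pathProb q (n+1) y.1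
          = D.pathProb q n x := by
        intro x
        have : ∀ y : {y : D.T (n+1) // D.par n y = x},
            D.pathProb q (n+1) y.1 = D.pathProb q n x * q n y.1 := by
          intro y
          show D.pathProb q n (D.par n y.1) * q n y.1 = _
          rw [y.2]
        rw [Finset.sum_congr rfl (fun y _ => this y), ← Finset.mul_sum, hq1 n x, mul_one]
      rw [Finset.sum_congr rfl (fun x _ => this x)]
      exact sum_pathProb q hq1 n

/-- cylinder sets -/
def cyl (D : TreeData) (m : ℕ) (u : Set (D.T m)) : Set D.Boundary :=
  (fun e : D.Boundary => e.1 m) ⁻¹' u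

lemma measurableSet_sector (n : ℕ) (x : D.T n) : MeasurableSet (D.sector n x) :=
  MeasurableSpace.measurableSet_generateFrom ⟨n, x, rfl⟩

lemma measurable_eval (n : ℕ) : Measurable (fun e : D.Boundary => e.1 n) := by
  apply measurable_to_countable
  intro e
  have : (fun e' : D.Boundary => e'.1 n) ⁻¹' {e.1 n} = D.sector n (e.1 n) := by
    ext e'; simp [sector, Set.mem_preimage]
  rw [this]
  exact measurableSet_sector n _

lemma measurableSet_cyl (m : ℕ) (u : Set (D.T m)) : MeasurableSet (D.cyl m u) :=
  measurable_eval m trivial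

lemma cyl_lift (m k : ℕ) (u : Set (D.T m)) :
    D.cyl m u = D.cyl (m+k) (D.projk m k ⁻¹' u) := by
  ext e
  simp only [cyl, Set.mem_preimage]
  rw [boundary_projk e m k]

lemma cyl_lift_le {m M : ℕ} (hmM : m ≤ M) (u : Set (D.T m)) :
    ∃ u' : Set (D.T M), D.cyl m u = D.cyl M u' := by
  obtain ⟨k, rfl⟩ := Nat.exists_eq_add_of_le hmM
  exact ⟨_, cyl_lift m k u⟩

lemma measurable_omegaMap {E : Type} [MeasurableSpace E] (f : D.Vert → E) (n : ℕ) :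
    Measurable (D.omegaMap f n) := by
  have : D.omegaMap f n = (fun x : D.T n => f ⟨n, x⟩) ∘ (fun e : D.Boundary => e.1 n) := rfl
  rw [this]
  exact measurable_from_top.comp (measurable_eval n)

lemma measurable_level {E : Type} [MeasurableSpace E] (m : ℕ) (t : D.T m → E) :
    Measurable (fun e : D.Boundary => t (e.1 m)) :=
  measurable_from_top.comp (measurable_eval m)

end TreeData
section Phi

lemma phi_nonneg' {t : ℝ} (h : 0 ≤ t) : 0 ≤ t/(1+t) := by positivity

lemma phi_le_one' {t : ℝ} (h : 0 ≤ t) : t/(1+t) ≤ 1 := by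
  rw [div_le_one (by linarith)]; linarith

lemma phi_le_self' {t : ℝ} (h : 0 ≤ t) : t/(1+t) ≤ t := by
  rw [div_le_iff₀ (by linarith)]; nlinarith

lemma phi_mono' {a b : ℝ} (ha : 0 ≤ a) (hab : a ≤ b) : a/(1+a) ≤ b/(1+b) := by
  rw [div_le_div_iff₀ (by linarith) (by linarith)]; nlinarith

lemma phi_tri' {a b c : ℝ} (ha : 0 ≤ a) (hb : 0 ≤ b) (hc : 0 ≤ c) (h : c ≤ a + b) :
    c/(1+c) ≤ a/(1+a) + b/(1+b) := by
  have h1 : c/(1+c) ≤ (a+b)/(1+(a+b)) := phi_mono' hc h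
  have h2 : (a+b)/(1+(a+b)) = a/(1+(a+b)) + b/(1+(a+b)) := by ring
  have h3 : a/(1+(a+b)) ≤ a/(1+a) := by
    apply div_le_div_of_nonneg_left ha (by linarith) (by linarith)
  have h4 : b/(1+(a+b)) ≤ b/(1+b) := by
    apply div_le_div_of_nonneg_left hb (by linarith) (by linarith)
  linarith

end Phi

instance (priority := 50) secondCountable_of_sep {E : Type} [MetricSpace E]
    [TopologicalSpace.SeparableSpace E] : SecondCountableTopology E :=
  UniformSpace.secondCountable_of_separable E

namespace TreeData

section DP

variable {D : TreeData} (P : Measure D.Boundary) [IsProbabilityMeasure P]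
variable {E : Type} [MetricSpace E] [MeasurableSpace E] [BorelSpace E]
  [TopologicalSpace.SeparableSpace E]
variable {F G H : D.Boundary → E}
set_option linter.unusedSectionVars false

lemma measurable_phi_dist (hF : Measurable F) (hG : Measurable G) :
    Measurable (fun e => dist (F e) (G e) / (1 + dist (F e) (G e))) := by
  have hd : Measurable fun e => dist (F e) (G e) := hF.dist hG
  exact hd.div (measurable_const.add hd)

lemma integrable_phi_dist (hF : Measurable F) (hG : Measurable G) :
    Integrable (fun e => dist (F e) (G e) / (1 + dist (F e) (G e))) P := by
  apply (integrable_const (1:ℝ)).mono' (measurable_phi_dist hF hG).aestronglyMeasurable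
  filter_upwards with e
  rw [Real.norm_eq_abs, abs_of_nonneg (phi_nonneg' dist_nonneg)]
  simpa using phi_le_one' (dist_nonneg (x := F e) (y := G e))

lemma dP_def (F G : D.Boundary → E) :
    D.dP P F G = ∫ e, dist (F e) (G e) / (1 + dist (F e) (G e)) ∂P := rfl

lemma dP_nonneg : 0 ≤ D.dP P F G :=
  MeasureTheory.integral_nonneg fun e => phi_nonneg' dist_nonneg

lemma dP_comm : D.dP P F G = D.dP P G F := by
  rw [dP_def, dP_def]
  apply MeasureTheory.integral_congr_ae
  filter_upwards with e
  rw [dist_comm]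

lemma dP_triangle (hF : Measurable F) (hG : Measurable G) (hH : Measurable H) :
    D.dP P F H ≤ D.dP P F G + D.dP P G H := by
  rw [dP_def, dP_def, dP_def, ← MeasureTheory.integral_add (integrable_phi_dist P hF hG)
    (integrable_phi_dist P hG hH)]
  apply MeasureTheory.integral_mono (integrable_phi_dist P hF hH)
    ((integrable_phi_dist P hF hG).add (integrable_phi_dist P hG hH))
  intro e
  exact phi_tri' dist_nonneg dist_nonneg dist_nonneg (dist_triangle _ _ _)

lemma dP_le_const (hF : Measurable F) (hG : Measurable G) {c : ℝ}
    (hc : ∀ e, dist (F e) (G e) / (1 + dist (F e) (G e)) ≤ c) : D.dP P F G ≤ c := by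
  rw [dP_def]
  calc ∫ e, dist (F e) (G e) / (1 + dist (F e) (G e)) ∂P ≤ ∫ _, c ∂P :=
        MeasureTheory.integral_mono (integrable_phi_dist P hF hG)
          (MeasureTheory.integrable_const c) hc
    _ = c := by simp [MeasureTheory.integral_const]

lemma dP_le_measure (hF : Measurable F) (hG : Measurable G) {B : Set D.Boundary}
    (hB : MeasurableSet B) (hFG : ∀ e ∉ B, F e = G e) : D.dP P F G ≤ (P B).toReal := by
  rw [dP_def]
  calc ∫ e, dist (F e) (G e) / (1 + dist (F e) (G e)) ∂P
      ≤ ∫ e, B.indicator (fun _ => (1:ℝ)) e ∂P := by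
        apply MeasureTheory.integral_mono (integrable_phi_dist P hF hG)
          ((MeasureTheory.integrable_const (1:ℝ)).indicator hB)
        intro e
        dsimp only
        by_cases he : e ∈ B
        · rw [Set.indicator_of_mem he]; exact phi_le_one' dist_nonneg
        · rw [Set.indicator_of_notMem he, hFG e he]
          simp
    _ = (P B).toReal := by rw [MeasureTheory.integral_indicator_const (1:ℝ) hB]; simp; rfl

lemma dP_le_bound (hF : Measurable F) (hG : Measurable G) {δ : ℝ} (hδ : 0 ≤ δ) :
    D.dP P F G ≤ (P {e | δ ≤ dist (F e) (G e)}).toReal + δ := by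
  have hB : MeasurableSet {e | δ ≤ dist (F e) (G e)} :=
    measurableSet_le measurable_const (hF.dist hG)
  rw [dP_def]
  calc ∫ e, dist (F e) (G e) / (1 + dist (F e) (G e)) ∂P
      ≤ ∫ e, ({e | δ ≤ dist (F e) (G e)}.indicator (fun _ => (1:ℝ)) e + δ) ∂P := by
        apply MeasureTheory.integral_mono (integrable_phi_dist P hF hG)
          (((MeasureTheory.integrable_const (1:ℝ)).indicator hB).add
            (MeasureTheory.integrable_const δ))
        intro e
        simp only [Pi.add_apply]
        by_cases he : δ ≤ dist (F e) (G e)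
        · have he' : e ∈ {e | δ ≤ dist (F e) (G e)} := he
          rw [Set.indicator_of_mem he']
          have := phi_le_one' (dist_nonneg (x := F e) (y := G e))
          linarith
        · have he' : e ∉ {e | δ ≤ dist (F e) (G e)} := he
          rw [Set.indicator_of_notMem he']
          push_neg at he
          have := phi_le_self' (dist_nonneg (x := F e) (y := G e))
          simp only [zero_add]
          linarith
    _ = (P {e | δ ≤ dist (F e) (G e)}).toReal + δ := by
        rw [MeasureTheory.integral_add (((MeasureTheory.integrable_const (1:ℝ)).indicator hB))
          (MeasureTheory.integrable_const δ),
          MeasureTheory.integral_indicator_const (1:ℝ) hB]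
        simp [MeasureTheory.integral_const]
        rfl

end DP
end TreeData
open scoped ENNReal
namespace TreeData
section Approx

variable {D : TreeData} (P : Measure D.Boundary) [IsProbabilityMeasure P]

lemma sector_eq_cyl (n : ℕ) (x : D.T n) : D.sector n x = D.cyl n {x} := rfl

lemma approx_set (s : Set D.Boundary) (hs : MeasurableSet s) :
    ∀ ε : ℝ≥0∞, 0 < ε → ∃ m u, P (symmDiff s (D.cyl m u)) < ε := by
  have hgen : MeasurableSet[MeasurableSpace.generateFrom
      {s | ∃ n, ∃ x : D.T n, s = D.sector n x}] s := hs
  clear hs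
  refine MeasurableSpace.generateFrom_induction
    (C := {s | ∃ n, ∃ x : D.T n, s = D.sector n x})
    (p := fun s _ => ∀ ε : ℝ≥0∞, 0 < ε → ∃ m u, P (symmDiff s (D.cyl m u)) < ε)
    ?_ ?_ ?_ ?_ s hgen
  · rintro t ⟨n, x, rfl⟩ _ ε hε
    exact ⟨n, {x}, by rw [← sector_eq_cyl, symmDiff_self]; simpa using hε⟩
  · intro ε hε
    refine ⟨0, ∅, ?_⟩
    have h1 : D.cyl 0 ∅ = (∅ : Set D.Boundary) := rfl
    rw [h1, symmDiff_self]
    simpa using hε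
  · intro t ht iht ε hε
    obtain ⟨m, u, hu⟩ := iht ε hε
    refine ⟨m, uᶜ, ?_⟩
    have h1 : D.cyl m uᶜ = (D.cyl m u)ᶜ := rfl
    rw [h1, compl_symmDiff_compl]
    exact hu
  · intro t htm iht ε hε
    rcases eq_or_ne ε ⊤ with rfl | hεtop
    · exact ⟨0, ∅, lt_of_le_of_lt (measure_mono (Set.subset_univ _))
        (measure_lt_top P _)⟩
    have hε2 : (0:ℝ≥0∞) < ε/2 := ENNReal.half_pos hε.ne'
    have hε2top : ε/2 ≠ ⊤ := by
      simp [ENNReal.div_eq_top, hεtop]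
    set B : ℕ → Set D.Boundary := fun K => (⋃ i, t i) \ Set.accumulate t K with hB
    have hBmeas : ∀ K, MeasurableSet (B K) := by
      intro K
      exact (MeasurableSet.iUnion htm).diff
        (by rw [Set.accumulate_def]
            exact MeasurableSet.biUnion (Set.to_countable _) (fun i _ => htm i))
    have hBanti : Antitone B := fun i j hij =>
      Set.diff_subset_diff_right (Set.monotone_accumulate hij)
    have hBempty : ⋂ K, B K = ∅ := by
      ext e
      simp only [Set.mem_iInter, Set.mem_empty_iff_false, iff_false, not_forall]
      by_cases he : e ∈ ⋃ i, t i
      · rcases Set.mem_iUnion.mp he with ⟨i, hi⟩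
        exact ⟨i, fun hc => hc.2 (Set.subset_accumulate hi)⟩
      · exact ⟨0, fun hc => he hc.1⟩
    have htend : Filter.Tendsto (fun K => P (B K)) Filter.atTop (𝓝 0) := by
      have h := tendsto_measure_iInter_atTop (μ := P) (s := B)
        (fun i => (hBmeas i).nullMeasurableSet) hBanti ⟨0, (measure_lt_top P _).ne⟩
      rw [hBempty, measure_empty] at h
      exact h
    obtain ⟨K, hK⟩ := (htend.eventually_lt_const hε2).exists
    have hηpos : (0:ℝ≥0∞) < ε/2/(K+1) := ENNReal.div_pos hε2.ne' (by simp)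
    have hch : ∀ i : ℕ, ∃ m u, P (symmDiff (t i) (D.cyl m u)) < ε/2/(K+1) :=
      fun i => iht i _ hηpos
    choose ms us hmu using hch
    set M := (Finset.range (K+1)).sup ms with hM
    have hlift : ∀ i : Fin (K+1), ∃ u', D.cyl (ms i) (us i) = D.cyl M u' :=
      fun i => cyl_lift_le (Finset.le_sup (Finset.mem_range.mpr i.2)) _
    choose u' hu' using hlift
    refine ⟨M, ⋃ i : Fin (K+1), u' i, ?_⟩
    have hCeq : D.cyl M (⋃ i, u' i) = ⋃ i : Fin (K+1), D.cyl (ms i.1) (us i.1) := by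
      simp only [cyl, Set.preimage_iUnion]
      exact Set.iUnion_congr fun i => (hu' i).symm
    have hincl : symmDiff (⋃ i, t i) (D.cyl M (⋃ i, u' i)) ⊆
        B K ∪ ⋃ i : Fin (K+1), symmDiff (t i.1) (D.cyl (ms i.1) (us i.1)) := by
      rw [hCeq]
      intro e he
      rcases Set.mem_symmDiff.mp he with ⟨he1, he2⟩ | ⟨he1, he2⟩
      · by_cases hacc : e ∈ Set.accumulate t K
        · rcases Set.mem_accumulate.mp hacc with ⟨i, hiK, hei⟩
          right
          refine Set.mem_iUnion.mpr ⟨⟨i, Nat.lt_succ_of_le hiK⟩, ?_⟩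
          exact Set.mem_symmDiff.mpr (Or.inl ⟨hei,
            fun hc => he2 (Set.mem_iUnion.mpr ⟨⟨i, Nat.lt_succ_of_le hiK⟩, hc⟩)⟩)
        · left; exact ⟨he1, hacc⟩
      · rcases Set.mem_iUnion.mp he1 with ⟨i, hei⟩
        right
        exact Set.mem_iUnion.mpr ⟨i, Set.mem_symmDiff.mpr (Or.inr ⟨hei,
          fun hc => he2 (Set.mem_iUnion.mpr ⟨i.1, hc⟩)⟩)⟩
    have hsum : ∑' i : Fin (K+1), P (symmDiff (t i.1) (D.cyl (ms i.1) (us i.1)))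
        ≤ ε/2 := by
      rw [tsum_fintype]
      calc ∑ i : Fin (K+1), P (symmDiff (t i.1) (D.cyl (ms i.1) (us i.1)))
          ≤ ∑ _i : Fin (K+1), ε/2/(K+1) :=
            Finset.sum_le_sum (fun i _ => (hmu i.1).le)
        _ = (K+1) * (ε/2/(K+1)) := by
            rw [Finset.sum_const, Finset.card_univ, Fintype.card_fin, nsmul_eq_mul]
            norm_cast
        _ = ε/2 := by
            rw [ENNReal.mul_div_cancel (by exact_mod_cast Nat.succ_ne_zero K)
              (by simp)]
    calc P (symmDiff (⋃ i, t i) (D.cyl M (⋃ i : Fin (K+1), u' i)))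
        ≤ P (B K ∪ ⋃ i : Fin (K+1), symmDiff (t i.1) (D.cyl (ms i.1) (us i.1))) :=
          measure_mono hincl
      _ ≤ P (B K) + P (⋃ i : Fin (K+1), symmDiff (t i.1) (D.cyl (ms i.1) (us i.1))) :=
          measure_union_le _ _
      _ ≤ P (B K) + ∑' i : Fin (K+1), P (symmDiff (t i.1) (D.cyl (ms i.1) (us i.1))) := by
          gcongr
          exact measure_iUnion_le _
      _ ≤ P (B K) + ε/2 := by gcongr
      _ < ε/2 + ε/2 := ENNReal.add_lt_add_right hε2top hK
      _ = ε := ENNReal.add_halves ε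

end Approx
end TreeData
namespace TreeData
section LevelApprox

variable {D : TreeData} (P : Measure D.Boundary) [IsProbabilityMeasure P]
variable {E : Type} [MetricSpace E] [MeasurableSpace E] [BorelSpace E]
  [TopologicalSpace.SeparableSpace E]

lemma exists_level_approx (es : ℕ → E) (hes : DenseRange es)
    (h : D.Boundary → E) (hh : Measurable h) {ε : ℝ} (hε : 0 < ε) :
    ∃ (m : ℕ) (σ : D.T m → ℕ), D.dP P (fun e => es (σ (e.1 m))) h < ε := by
  classical
  set δ := ε/4 with hδdef
  have hδpos : 0 < δ := by positivity
  set C : ℕ → Set D.Boundary := fun i => h ⁻¹' Metric.ball (es i) δ with hC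
  have hCmeas : ∀ i, MeasurableSet (C i) := fun i => hh Metric.isOpen_ball.measurableSet
  have hCcover : (⋃ i, C i) = Set.univ := by
    ext e
    simp only [Set.mem_iUnion, Set.mem_univ, iff_true, hC, Set.mem_preimage,
      Metric.mem_ball]
    obtain ⟨y, hy⟩ := hes.exists_dist_lt (h e) hδpos
    exact ⟨y, by simpa [dist_comm] using hy⟩
  set A : ℕ → Set D.Boundary := fun K => (Set.accumulate C K)ᶜ with hA
  have hAmeas : ∀ K, MeasurableSet (A K) := by
    intro K
    rw [hA]
    exact (by rw [Set.accumulate_def]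
              exact MeasurableSet.biUnion (Set.to_countable _) fun i _ => hCmeas i :
          MeasurableSet (Set.accumulate C K)).compl
  have hAanti : Antitone A := fun i j hij =>
    Set.compl_subset_compl.mpr (Set.monotone_accumulate hij)
  have hAempty : ⋂ K, A K = ∅ := by
    ext e
    simp only [Set.mem_iInter, Set.mem_empty_iff_false, iff_false, not_forall]
    have : e ∈ ⋃ i, C i := hCcover ▸ Set.mem_univ e
    rcases Set.mem_iUnion.mp this with ⟨i, hi⟩
    exact ⟨i, fun hc => hc (Set.subset_accumulate hi)⟩
  have htend : Filter.Tendsto (fun K => P (A K)) Filter.atTop (𝓝 0) := by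
    have h' := tendsto_measure_iInter_atTop (μ := P) (s := A)
      (fun i => (hAmeas i).nullMeasurableSet) hAanti ⟨0, (measure_lt_top P _).ne⟩
    rwa [hAempty, measure_empty] at h'
  have hδE : (0:ℝ≥0∞) < ENNReal.ofReal δ := ENNReal.ofReal_pos.mpr hδpos
  obtain ⟨K, hK⟩ := (htend.eventually_lt_const hδE).exists
  have hηpos : (0:ℝ≥0∞) < ENNReal.ofReal δ / (K+1) :=
    ENNReal.div_pos hδE.ne' (by simp)
  have hch : ∀ i : ℕ, ∃ m u, P (symmDiff (C i) (D.cyl m u)) < ENNReal.ofReal δ / (K+1) :=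
    fun i => approx_set P (C i) (hCmeas i) _ hηpos
  choose ms us hmu using hch
  set M := (Finset.range (K+1)).sup ms with hM
  have hlift : ∀ i : Fin (K+1), ∃ u', D.cyl (ms i.1) (us i.1) = D.cyl M u' :=
    fun i => cyl_lift_le (Finset.le_sup (Finset.mem_range.mpr i.2)) _
  choose u' hu' using hlift
  set u'' : ℕ → Set (D.T M) := fun i => if hi : i < K+1 then u' ⟨i, hi⟩ else ∅ with hu''
  set σ : D.T M → ℕ := fun x =>
    if hx : ∃ i, i < K+1 ∧ x ∈ u'' i then Nat.find hx else 0 with hσ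
  refine ⟨M, σ, ?_⟩
  set Bad : Set D.Boundary :=
    A K ∪ ⋃ i : Fin (K+1), symmDiff (C i.1) (D.cyl M (u' i)) with hBad
  have hgood : ∀ e, e ∉ Bad → dist (es (σ (e.1 M))) (h e) < δ := by
    intro e he
    have heA : e ∉ A K := fun hc => he (Set.mem_union_left _ hc)
    have heS : ∀ i : Fin (K+1), e ∉ symmDiff (C i.1) (D.cyl M (u' i)) := by
      intro i hc
      exact he (Set.mem_union_right _ (Set.mem_iUnion.mpr ⟨i, hc⟩))
    have heacc : e ∈ Set.accumulate C K := by
      by_contra hc; exact heA hc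
    rcases Set.mem_accumulate.mp heacc with ⟨i, hiK, hei⟩
    have hiK' : i < K+1 := Nat.lt_succ_of_le hiK
    have hecyl : e ∈ D.cyl M (u' ⟨i, hiK'⟩) := by
      by_contra hc
      exact heS ⟨i, hiK'⟩ (Set.mem_symmDiff.mpr (Or.inl ⟨hei, hc⟩))
    have hx : ∃ j, j < K+1 ∧ e.1 M ∈ u'' j := by
      refine ⟨i, hiK', ?_⟩
      rw [hu'']
      simpa [hiK', cyl] using hecyl
    have hσx : σ (e.1 M) = Nat.find hx := by rw [hσ]; simp only [dif_pos hx]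
    obtain ⟨hjK, hju⟩ := Nat.find_spec hx
    set j := Nat.find hx
    have hecylj : e ∈ D.cyl M (u' ⟨j, hjK⟩) := by
      have : e.1 M ∈ u'' j := hju
      rw [hu''] at this
      exact (by simpa [hjK] using this : e.1 M ∈ u' ⟨j, hjK⟩)
    have heCj : e ∈ C j := by
      by_contra hc
      exact heS ⟨j, hjK⟩ (Set.mem_symmDiff.mpr (Or.inr ⟨hecylj, hc⟩))
    have : dist (h e) (es j) < δ := by
      have := heCj
      rw [hC] at this
      simpa [Metric.mem_ball] using this
    rw [hσx, dist_comm]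
    exact this
  have hBadMeas : MeasurableSet Bad := by
    apply (hAmeas K).union
    exact MeasurableSet.iUnion fun i =>
      ((hCmeas i.1).symmDiff (measurableSet_cyl M (u' i)))
  have hsub : {e | δ ≤ dist (es (σ (e.1 M))) (h e)} ⊆ Bad := by
    intro e he
    by_contra hc
    exact absurd (hgood e hc) (not_lt.mpr he)
  have hPBad : P Bad ≤ ENNReal.ofReal δ + ENNReal.ofReal δ := by
    calc P Bad ≤ P (A K) + P (⋃ i : Fin (K+1), symmDiff (C i.1) (D.cyl M (u' i))) :=
          measure_union_le _ _
      _ ≤ P (A K) + ∑' i : Fin (K+1), P (symmDiff (C i.1) (D.cyl M (u' i))) := by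
          gcongr; exact measure_iUnion_le _
      _ ≤ ENNReal.ofReal δ + ENNReal.ofReal δ := by
          apply add_le_add hK.le
          rw [tsum_fintype]
          calc ∑ i : Fin (K+1), P (symmDiff (C i.1) (D.cyl M (u' i)))
                ≤ ∑ _i : Fin (K+1), ENNReal.ofReal δ / (K+1) := by
                  apply Finset.sum_le_sum
                  intro i _
                  rw [← hu' i]
                  exact (hmu i.1).le
              _ = (K+1) * (ENNReal.ofReal δ / (K+1)) := by
                  rw [Finset.sum_const, Finset.card_univ, Fintype.card_fin, nsmul_eq_mul]
                  norm_cast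
              _ = ENNReal.ofReal δ := ENNReal.mul_div_cancel
                  (by exact_mod_cast Nat.succ_ne_zero K) (by simp)
  have hmeasσ : Measurable (fun e : D.Boundary => es (σ (e.1 M))) :=
    measurable_level M (fun x => es (σ x))
  calc D.dP P (fun e => es (σ (e.1 M))) h
      ≤ (P {e | δ ≤ dist (es (σ (e.1 M))) (h e)}).toReal + δ :=
        dP_le_bound P hmeasσ hh hδpos.le
    _ ≤ (ENNReal.ofReal δ + ENNReal.ofReal δ).toReal + δ := by
        have h1 : (P {e | δ ≤ dist (es (σ (e.1 M))) (h e)}).toReal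
            ≤ (ENNReal.ofReal δ + ENNReal.ofReal δ).toReal :=
          ENNReal.toReal_mono (by simp) (le_trans (measure_mono hsub) hPBad)
        linarith
    _ = 3 * δ := by
        rw [ENNReal.toReal_add (by simp) (by simp), ENNReal.toReal_ofReal hδpos.le]
        ring
    _ < ε := by rw [hδdef]; linarith

end LevelApprox
end TreeData
namespace TreeData
section Lift

open scoped Classical

variable {D : TreeData} {𝔽 E : Type} [Field 𝔽] [AddCommGroup E] [Module 𝔽 E]
variable (w : ∀ n, D.T (n + 1) → 𝔽)

/-- one-step harmonic lift -/
noncomputable def liftOne (j : ℕ) (v : D.T (j+1) → E) : D.T j → E :=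
  fun x => ∑ y : {y : D.T (j+1) // D.par j y = x}, w j y.1 • v y.1

/-- k-step harmonic lift -/
noncomputable def liftk : ∀ (j k : ℕ), (D.T (j + k) → E) → D.T j → E
  | _, 0, v => v
  | j, k+1, v => liftk j k (liftOne w (j+k) v)

@[simp] lemma liftk_zero (j : ℕ) (v : D.T j → E) : liftk w j 0 v = v := rfl

lemma liftk_succ (j k : ℕ) (v : D.T (j + (k+1)) → E) :
    liftk w j (k+1) v = liftk w j k (liftOne w (j+k) v) := rfl

lemma liftOne_cast {a b : ℕ} (hab : a = b) (v : D.T (b+1) → E) (z : D.T a) :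
    liftOne w b v (D.cT hab z)
      = liftOne w a (fun y => v (D.cT (congrArg Nat.succ hab) y)) z := by
  subst hab; rfl

lemma liftk_near (j : ℕ) : ∀ (s : ℕ) (v : D.T (j + (s+1)) → E) (x : D.T j),
    liftk w j (s+1) v x = ∑ y : {y : D.T (j+1) // D.par j y = x},
      w j y.1 • liftk w (j+1) s
        (fun z => v (D.cT (by omega : (j+1)+s = j+(s+1)) z)) y.1
  | 0, v, x => by
      show liftOne w j v x = _
      have h : ∀ y : D.T (j+1),
          liftk w (j+1) 0 (fun z => v (D.cT (by omega : (j+1)+0 = j+(0+1)) z)) y = v y :=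
        fun y => rfl
      simp only [h]
      rfl
  | s+1, v, x => by
      rw [liftk_succ, liftk_near j s (liftOne w (j+(s+1)) v) x]
      apply Finset.sum_congr rfl
      intro y _
      congr 1
      have harg : (fun z : D.T ((j+1)+s) => liftOne w (j+(s+1)) v
            (D.cT (by omega : (j+1)+s = j+(s+1)) z))
          = liftOne w ((j+1)+s) (fun z' : D.T ((j+1)+s+1) => v
            (D.cT (by omega : (j+1)+s+1 = j+(s+1)+1) z')) := by
        funext z
        exact liftOne_cast w (by omega : (j+1)+s = j+(s+1)) v z
      rw [harg]
      rfl

lemma liftk_shift (j : ℕ) {k1 k2 M : ℕ} (h : k1 = k2) (v : D.T M → E)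
    (p1 : j + k1 = M) (p2 : j + k2 = M) (x : D.T j) :
    liftk w j k1 (fun z => v (D.cT p1 z)) x = liftk w j k2 (fun z => v (D.cT p2 z)) x := by
  subst h; rfl

lemma liftk_add (j : ℕ) : ∀ (k : ℕ) (v u : D.T (j + k) → E) (x : D.T j),
    liftk w j k (fun z => v z + u z) x = liftk w j k v x + liftk w j k u x
  | 0, v, u, x => rfl
  | k+1, v, u, x => by
      rw [liftk_succ, liftk_succ, liftk_succ]
      calc liftk w j k (liftOne w (j+k) fun z => v z + u z) x
          = liftk w j k (fun z => liftOne w (j+k) v z + liftOne w (j+k) u z) x := by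
            congr 1
            funext z
            simp [liftOne, smul_add, Finset.sum_add_distrib]
        _ = _ := liftk_add j k _ _ x

lemma liftk_local (j : ℕ) : ∀ (k : ℕ) (v v' : D.T (j + k) → E) (x : D.T j),
    (∀ y, D.projk j k y = x → v y = v' y) → liftk w j k v x = liftk w j k v' x
  | 0, v, v', x, hv => hv x rfl
  | k+1, v, v', x, hv => by
      rw [liftk_succ, liftk_succ]
      apply liftk_local j k _ _ x
      intro z hz
      have hy : ∀ y : {y : D.T (j+(k+1)) // D.par (j+k) y = z}, v y.1 = v' y.1 := by
        intro y
        apply hv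
        show D.projk j k (D.par (j+k) y.1) = x
        rw [y.2]; exact hz
      simp only [liftOne]
      exact Finset.sum_congr rfl fun y _ => by rw [hy y]

/-- product of weights along the ancestor path -/
noncomputable def wProd : ∀ (j k : ℕ), D.T (j + k) → 𝔽
  | _, 0, _ => 1
  | j, k+1, y => wProd j k (D.par (j+k) y) * w (j+k) y

lemma wProd_ne_zero (hw : ∀ n y, w n y ≠ 0) (j : ℕ) :
    ∀ (k : ℕ) (y : D.T (j + k)), wProd w j k y ≠ 0
  | 0, _ => one_ne_zero
  | k+1, y => mul_ne_zero (wProd_ne_zero hw j k _) (hw _ _)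

lemma liftk_delta (j : ℕ) : ∀ (k : ℕ) (y₀ : D.T (j + k)) (r : E) (x : D.T j),
    liftk w j k (fun y => if y = y₀ then r else 0) x
      = if D.projk j k y₀ = x then wProd w j k y₀ • r else 0
  | 0, y₀, r, x => by
      show (if x = y₀ then r else 0) = if D.projk j 0 y₀ = x then wProd w j 0 y₀ • r else 0
      by_cases hxy : x = y₀
      · subst hxy
        rw [if_pos rfl, if_pos (show D.projk j 0 x = x from rfl)]
        exact (one_smul 𝔽 r).symm
      · rw [if_neg hxy, if_neg (fun hc : D.projk j 0 y₀ = x => hxy hc.symm)]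
  | k+1, y₀, r, x => by
      rw [liftk_succ]
      have hOne : liftk w j k (liftOne w (j+k) fun y => if y = y₀ then r else 0) x
          = liftk w j k (fun z => if z = D.par (j+k) y₀ then w (j+k) y₀ • r else 0) x := by
        congr 1
        funext z
        by_cases hz : D.par (j+k) y₀ = z
        · rw [if_pos hz.symm]
          show (∑ y : {y : D.T (j+k+1) // D.par (j+k) y = z},
            w (j+k) y.1 • (if y.1 = y₀ then r else 0)) = w (j+k) y₀ • r
          refine (Finset.sum_eq_single
            (⟨y₀, hz⟩ : {y : D.T (j+k+1) // D.par (j+k) y = z}) ?_ ?_).trans ?_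
          · intro y _ hy
            have hne : y.1 ≠ y₀ := fun hc => hy (Subtype.ext hc)
            rw [if_neg hne, smul_zero]
          · intro hc
            exact absurd (Finset.mem_univ _) hc
          · rw [if_pos rfl]
        · rw [if_neg (fun hc : z = D.par (j+k) y₀ => hz hc.symm)]
          show (∑ y : {y : D.T (j+k+1) // D.par (j+k) y = z},
            w (j+k) y.1 • (if y.1 = y₀ then r else 0)) = 0
          apply Finset.sum_eq_zero
          intro y _
          have hne : y.1 ≠ y₀ := fun hc => hz (by rw [← hc]; exact y.2)
          rw [if_neg hne, smul_zero]
      refine hOne.trans ?_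
      rw [liftk_delta j k (D.par (j+k) y₀) (w (j+k) y₀ • r) x]
      by_cases hp : D.projk j k (D.par (j+k) y₀) = x
      · rw [if_pos hp, if_pos (show D.projk j (k+1) y₀ = x from hp), smul_smul]
        rfl
      · rw [if_neg hp, if_neg (show ¬ (D.projk j (k+1) y₀ = x) from hp)]

end Lift
end TreeData
namespace TreeData
section Construct

open scoped Classical

variable {D : TreeData} {𝔽 E : Type} [Field 𝔽] [AddCommGroup E] [Module 𝔽 E]
variable (w : ∀ n, D.T (n + 1) → 𝔽) (q : ∀ n, D.T (n + 1) → ℝ)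

/-- canonical harmonic extension below a level -/
noncomputable def down (n : ℕ) (v : D.T n → E) : ∀ j, D.T (n+j) → E
  | 0 => v
  | j+1 => fun y => if y = sacChild q (n+j) (D.par (n+j) y)
      then (w (n+j) y)⁻¹ • down n v j (D.par (n+j) y) else 0

lemma down_step (hw : ∀ n y, w n y ≠ 0) (n : ℕ) (v : D.T n → E) (j : ℕ) (z : D.T (n+j)) :
    down w q n v j z = ∑ y : {y : D.T (n+j+1) // D.par (n+j) y = z},
      w (n+j) y.1 • down w q n v (j+1) y.1 := by
  refine ((Finset.sum_eq_single
      (⟨sacChild q (n+j) z, par_sacChild q (n+j) z⟩ :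
        {y : D.T (n+j+1) // D.par (n+j) y = z}) ?_ ?_).trans ?_).symm
  · intro y _ hy
    have hne : ¬ (y.1 = sacChild q (n+j) (D.par (n+j) y.1)) := by
      rw [y.2]
      exact fun hc => hy (Subtype.ext hc)
    show w (n+j) y.1 • (if y.1 = sacChild q (n+j) (D.par (n+j) y.1)
      then (w (n+j) y.1)⁻¹ • down w q n v j (D.par (n+j) y.1) else 0) = 0
    rw [if_neg hne, smul_zero]
  · intro hc
    exact absurd (Finset.mem_univ _) hc
  · have hcond : sacChild q (n+j) z
        = sacChild q (n+j) (D.par (n+j) (sacChild q (n+j) z)) := by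
      rw [par_sacChild]
    show w (n+j) (sacChild q (n+j) z) •
      (if sacChild q (n+j) z = sacChild q (n+j) (D.par (n+j) (sacChild q (n+j) z))
        then (w (n+j) (sacChild q (n+j) z))⁻¹ •
          down w q n v j (D.par (n+j) (sacChild q (n+j) z)) else 0) = down w q n v j z
    rw [if_pos hcond, par_sacChild, smul_smul, mul_inv_cancel₀ (hw _ _), one_smul]

lemma down_shift (n : ℕ) (v : D.T n → E) {j1 j2 : ℕ} (h : j1 = j2) (p : n+j1 = n+j2)
    (x : D.T (n+j1)) : down w q n v j2 (D.cT p x) = down w q n v j1 x := by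
  subst h; rfl

lemma construct (hw : ∀ n y, w n y ≠ 0)
    {g : D.Vert → E} (hg : D.Harmonic w g) (N k : ℕ) (hk : 0 < k) (t' : D.T N → E) :
    ∃ f : D.Vert → E, D.Harmonic w f ∧
      (∀ i, i ≤ N → ∀ x : D.T i, f ⟨i, x⟩ = g ⟨i, x⟩) ∧
      ∀ y : D.T (N + k), y ≠ sacPath q N k (D.projk N k y) →
        f ⟨N + k, y⟩ = t' (D.projk N k y) := by
  classical
  set v₁ : D.T (N+k) → E := fun y =>
    if y = sacPath q N k (D.projk N k y) then 0 else t' (D.projk N k y) with hv₁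
  set r : D.T N → E := fun x =>
    (wProd w N k (sacPath q N k x))⁻¹ • (g ⟨N, x⟩ - liftk w N k v₁ x) with hr
  set v : D.T (N+k) → E := fun y =>
    if y = sacPath q N k (D.projk N k y) then r (D.projk N k y)
    else t' (D.projk N k y) with hv
  have hkey : ∀ x : D.T N, liftk w N k v x = g ⟨N, x⟩ := by
    intro x
    set v₂ : D.T (N+k) → E := fun y =>
      if y = sacPath q N k (D.projk N k y) then r (D.projk N k y) else 0 with hv₂
    have hsum : ∀ y, v y = v₁ y + v₂ y := by
      intro y
      by_cases hy : y = sacPath q N k (D.projk N k y)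
      · simp only [hv, hv₁, hv₂, if_pos hy, zero_add]
      · simp only [hv, hv₁, hv₂, if_neg hy, add_zero]
    have h1 : liftk w N k v x = liftk w N k v₁ x + liftk w N k v₂ x := by
      rw [liftk_local w N k v (fun y => v₁ y + v₂ y) x (fun y _ => hsum y)]
      exact liftk_add w N k v₁ v₂ x
    have h2 : liftk w N k v₂ x = wProd w N k (sacPath q N k x) • r x := by
      have hloc : liftk w N k v₂ x
          = liftk w N k (fun y => if y = sacPath q N k x then r x else 0) x := by
        apply liftk_local w N k _ _ x
        intro y hy
        by_cases h3 : y = sacPath q N k x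
        · have hcond : y = sacPath q N k (D.projk N k y) := by rw [hy]; exact h3
          simp only [hv₂, if_pos hcond, if_pos h3, hy]
        · have hcond : ¬ (y = sacPath q N k (D.projk N k y)) := by rw [hy]; exact h3
          simp only [hv₂, if_neg hcond, if_neg h3]
      rw [hloc, liftk_delta w N k (sacPath q N k x) (r x) x,
        if_pos (projk_sacPath q N k x)]
    rw [h1, h2, hr]
    simp only []
    rw [smul_smul, mul_inv_cancel₀ (wProd_ne_zero w hw N k _), one_smul]
    abel
  set f : D.Vert → E := fun p =>
    if h1 : p.1 ≤ N then g p
    else if h2 : p.1 ≤ N + k then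
      liftk w p.1 (N + k - p.1)
        (fun z => v (D.cT (show p.1 + (N+k-p.1) = N+k by omega) z)) p.2
    else down w q (N+k) v (p.1 - (N+k))
      (D.cT (show p.1 = (N+k)+(p.1-(N+k)) by omega) p.2) with hf
  have hfg : ∀ i, i ≤ N → ∀ x : D.T i, f ⟨i, x⟩ = g ⟨i, x⟩ := by
    intro i hi x
    simp only [hf]
    rw [dif_pos hi]
  have hmid : ∀ i, N ≤ i → ∀ h2 : i ≤ N + k, ∀ x : D.T i, f ⟨i, x⟩
      = liftk w i (N+k-i)
        (fun z => v (D.cT (show i + (N+k-i) = N+k by omega) z)) x := by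
    intro i h1 h2 x
    by_cases hiN : i ≤ N
    · have hieq : i = N := le_antisymm hiN h1
      subst hieq
      have e1 : liftk w i (i+k-i)
            (fun z => v (D.cT (show i + (i+k-i) = i+k by omega) z)) x
          = liftk w i k (fun z => v (D.cT (show i + k = i + k by omega) z)) x :=
        liftk_shift w i (by omega) v _ _ x
      have e2 : liftk w i k (fun z => v (D.cT (show i + k = i + k by omega) z)) x
          = liftk w i k v x := rfl
      rw [e1, e2, hkey x]
      exact hfg i le_rfl x
    · simp only [hf]
      rw [dif_neg hiN, dif_pos h2]
  have hdown : ∀ j (x : D.T ((N+k)+j)), f ⟨(N+k)+j, x⟩ = down w q (N+k) v j x := by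
    intro j x
    cases j with
    | zero =>
        have h0 : f ⟨(N+k)+0, x⟩ = liftk w ((N+k)+0) (N+k-((N+k)+0))
            (fun z => v (D.cT (show ((N+k)+0) + (N+k-((N+k)+0)) = N+k by omega) z)) x :=
          hmid ((N+k)+0) (by omega) (by omega) x
        have h1 : liftk w ((N+k)+0) (N+k-((N+k)+0))
            (fun z => v (D.cT (show ((N+k)+0) + (N+k-((N+k)+0)) = N+k by omega) z)) x
            = liftk w ((N+k)+0) 0
              (fun z => v (D.cT (show ((N+k)+0) + 0 = N+k by omega) z)) x :=
          liftk_shift w ((N+k)+0) (by omega) v _ _ x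
        rw [h0, h1]
        rfl
    | succ j =>
        simp only [hf]
        rw [dif_neg (by omega : ¬ ((N+k)+(j+1) ≤ N)),
          dif_neg (by omega : ¬ ((N+k)+(j+1) ≤ N+k))]
        exact down_shift w q (N+k) v (by omega) _ x
  refine ⟨f, ?_, hfg, ?_⟩
  · intro i x
    rcases lt_or_ge i N with hiN | hiN
    · calc f ⟨i, x⟩ = g ⟨i, x⟩ := hfg i hiN.le x
        _ = ∑ y : {y : D.T (i+1) // D.par i y = x}, w i y.1 • g ⟨i+1, y.1⟩ := hg i x
        _ = ∑ y : {y : D.T (i+1) // D.par i y = x}, w i y.1 • f ⟨i+1, y.1⟩ :=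
          Finset.sum_congr rfl fun y _ => by rw [hfg (i+1) hiN y.1]
    · rcases lt_or_ge i (N+k) with hik | hik
      · have hs : N+k-i = (N+k-(i+1))+1 := by omega
        calc f ⟨i, x⟩
            = liftk w i (N+k-i)
              (fun z => v (D.cT (show i + (N+k-i) = N+k by omega) z)) x :=
              hmid i hiN hik.le x
          _ = liftk w i ((N+k-(i+1))+1)
              (fun z => v (D.cT (show i + ((N+k-(i+1))+1) = N+k by omega) z)) x :=
              liftk_shift w i hs v (show i + (N+k-i) = N+k by omega)
                (show i + ((N+k-(i+1))+1) = N+k by omega) x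
          _ = ∑ y : {y : D.T (i+1) // D.par i y = x}, w i y.1 •
              liftk w (i+1) (N+k-(i+1))
                (fun z => (fun z' => v (D.cT (show i + ((N+k-(i+1))+1) = N+k by omega) z'))
                  (D.cT (by omega : (i+1)+(N+k-(i+1)) = i+((N+k-(i+1))+1)) z)) y.1 :=
              liftk_near w i (N+k-(i+1)) _ x
          _ = ∑ y : {y : D.T (i+1) // D.par i y = x}, w i y.1 • f ⟨i+1, y.1⟩ := by
              apply Finset.sum_congr rfl
              intro y _
              congr 1
              rw [hmid (i+1) (by omega) (by omega) y.1]
              have hcomp : ∀ z : D.T ((i+1)+(N+k-(i+1))),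
                  D.cT (show i + ((N+k-(i+1))+1) = N+k by omega)
                    (D.cT (by omega : (i+1)+(N+k-(i+1)) = i+((N+k-(i+1))+1)) z)
                  = D.cT (show (i+1) + (N+k-(i+1)) = N+k by omega) z := by
                intro z
                rw [cT_cT]
              simp only [hcomp]
      · obtain ⟨j, rfl⟩ := Nat.exists_eq_add_of_le hik
        calc f ⟨(N+k)+j, x⟩ = down w q (N+k) v j x := hdown j x
          _ = ∑ y : {y : D.T ((N+k)+j+1) // D.par ((N+k)+j) y = x},
              w ((N+k)+j) y.1 • down w q (N+k) v (j+1) y.1 := down_step w q hw (N+k) v j x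
          _ = ∑ y : {y : D.T ((N+k)+j+1) // D.par ((N+k)+j) y = x},
              w ((N+k)+j) y.1 • f ⟨(N+k)+j+1, y.1⟩ :=
              Finset.sum_congr rfl fun y _ =>
                congrArg (fun z => w ((N+k)+j) y.1 • z) (hdown (j+1) y.1).symm
  · intro y hy
    have h0 : f ⟨N+k, y⟩ = liftk w (N+k) (N+k-(N+k))
        (fun z => v (D.cT (show (N+k) + (N+k-(N+k)) = N+k by omega) z)) y :=
      hmid (N+k) (by omega) le_rfl y
    have h1 : liftk w (N+k) (N+k-(N+k))
        (fun z => v (D.cT (show (N+k) + (N+k-(N+k)) = N+k by omega) z)) y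
        = liftk w (N+k) 0 (fun z => v (D.cT (show (N+k) + 0 = N+k by omega) z)) y :=
      liftk_shift w (N+k) (by omega) v _ _ y
    have h2 : liftk w (N+k) 0
        (fun z => v (D.cT (show (N+k) + 0 = N+k by omega) z)) y = v y := rfl
    rw [h0, h1, h2, hv]
    simp only [if_neg hy]

end Construct
end TreeData
namespace TreeData
section OneStep
open scoped ENNReal

variable {D : TreeData} {𝔽 E : Type} [Field 𝔽] [AddCommGroup E] [Module 𝔽 E]
  [MetricSpace E] [MeasurableSpace E] [BorelSpace E] [TopologicalSpace.SeparableSpace E]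
variable (w : ∀ n, D.T (n + 1) → 𝔽) (q : ∀ n, D.T (n + 1) → ℝ)

lemma onestep (hw : ∀ n y, w n y ≠ 0)
    (hq0 : ∀ n y, 0 < q n y)
    (hq1 : ∀ n (x : D.T n), ∑ y : {y : D.T (n + 1) // D.par n y = x}, q n y.1 = 1)
    (P : Measure D.Boundary) [IsProbabilityMeasure P]
    (hP : ∀ n (x : D.T n), P (D.sector n x) = ENNReal.ofReal (D.pathProb q n x))
    (τ : Set ℕ) (hτ : τ.Infinite)
    {g : D.Vert → E} (hg : D.Harmonic w g) (N₀ m : ℕ) (t : D.T m → E)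
    {ε : ℝ} (hε : 0 < ε) :
    ∃ (f : D.Vert → E) (n : ℕ), D.Harmonic w f ∧ n ∈ τ ∧ N₀ < n ∧
      (∀ i, i ≤ N₀ → ∀ x : D.T i, f ⟨i, x⟩ = g ⟨i, x⟩) ∧
      D.dP P (D.omegaMap f n) (fun e => t (e.1 m)) < ε := by
  classical
  set N := max N₀ m with hN
  obtain ⟨d, hd⟩ := Nat.exists_eq_add_of_le (le_max_right N₀ m)
  obtain ⟨j₀, hj₀⟩ := exists_pow_lt_of_lt_one hε (by norm_num : (1/2 : ℝ) < 1)
  obtain ⟨n, hnτ, hn⟩ := hτ.exists_gt (N + j₀)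
  obtain ⟨k, hk⟩ := Nat.exists_eq_add_of_le (show N ≤ n by omega)
  subst hk
  have hkj : j₀ < k := by omega
  have hkpos : 0 < k := by omega
  set t' : D.T N → E := fun x => t (D.projk m d (D.cT hd x)) with ht'
  obtain ⟨f, hfharm, hfg, hleaf⟩ := construct w q hw hg N k hkpos t'
  refine ⟨f, N + k, hfharm, hnτ, by omega,
    fun i hi x => hfg i (le_trans hi (le_max_left _ _)) x, ?_⟩
  set Bad : Set D.Boundary := ⋃ x : D.T N, D.sector (N+k) (sacPath q N k x) with hBad
  have hBadmeas : MeasurableSet Bad :=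
    MeasurableSet.iUnion fun x => measurableSet_sector _ _
  have hgood : ∀ e ∉ Bad, D.omegaMap f (N+k) e = t (e.1 m) := by
    intro e he
    have hy : e.1 (N+k) ≠ sacPath q N k (D.projk N k (e.1 (N+k))) := by
      intro hc
      apply he
      rw [hBad]
      exact Set.mem_iUnion.mpr ⟨D.projk N k (e.1 (N+k)), hc⟩
    have h1 : f ⟨N+k, e.1 (N+k)⟩ = t' (D.projk N k (e.1 (N+k))) := hleaf _ hy
    show f ⟨N+k, e.1 (N+k)⟩ = t (e.1 m)
    rw [h1, boundary_projk e N k, ht']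
    exact congrArg t ((congrArg (D.projk m d) (cT_boundary e hd)).trans (boundary_projk e m d))
  have hPBad : P Bad ≤ ENNReal.ofReal ((1/2:ℝ)^k) := by
    calc P Bad ≤ ∑' x : D.T N, P (D.sector (N+k) (sacPath q N k x)) :=
          measure_iUnion_le _
      _ = ∑ x : D.T N, P (D.sector (N+k) (sacPath q N k x)) := tsum_fintype _
      _ = ∑ x : D.T N, ENNReal.ofReal (D.pathProb q (N+k) (sacPath q N k x)) :=
          Finset.sum_congr rfl fun x _ => hP _ _
      _ ≤ ∑ x : D.T N, ENNReal.ofReal (D.pathProb q N x * (1/2:ℝ)^k) := by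
          apply Finset.sum_le_sum
          intro x _
          exact ENNReal.ofReal_le_ofReal (pathProb_sacPath q hq0 hq1 N k x)
      _ = ENNReal.ofReal (∑ x : D.T N, D.pathProb q N x * (1/2:ℝ)^k) := by
          rw [ENNReal.ofReal_sum_of_nonneg]
          intro x _
          have := pathProb_nonneg q hq0 N x
          positivity
      _ = ENNReal.ofReal ((1/2:ℝ)^k) := by
          rw [← Finset.sum_mul, sum_pathProb q hq1 N, one_mul]
  have hdp : D.dP P (D.omegaMap f (N+k)) (fun e => t (e.1 m)) ≤ (P Bad).toReal :=
    dP_le_measure P (measurable_omegaMap f (N+k)) (measurable_level m t) hBadmeas hgood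
  have h2 : (P Bad).toReal ≤ (1/2:ℝ)^k := by
    have h2' := ENNReal.toReal_mono (by simp) hPBad
    rwa [ENNReal.toReal_ofReal (by positivity)] at h2'
  have h3 : (1/2:ℝ)^k < ε :=
    lt_of_le_of_lt (pow_le_pow_of_le_one (by norm_num) (by norm_num) hkj.le) hj₀
  linarith

end OneStep
end TreeData
/-- For any infinite τ ⊆ ℕ, the set U_τ(T,E) of generalized harmonic
functions f such that (ω_n f)_{n ∈ τ} is dense in L⁰(∂T,E) is a dense Gδ subset of
H(T,E) (with the topology induced from the product topology on E^T). -/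
theorem universality_dense_Gdelta (D : TreeData)
    (w : ∀ n, D.T (n + 1) → 𝔽) (hw : ∀ n y, w n y ≠ 0)
    (hdist : ∀ a x y : E, dist (a + x) (a + y) = dist x y)
    (q : ∀ n, D.T (n + 1) → ℝ) (hq0 : ∀ n y, 0 < q n y)
    (hq1 : ∀ n (x : D.T n), ∑ y : {y : D.T (n + 1) // D.par n y = x}, q n y.1 = 1)
    (P : Measure D.Boundary) [IsProbabilityMeasure P]
    (hP : ∀ n (x : D.T n), P (D.sector n x) = ENNReal.ofReal (D.pathProb q n x))
    (τ : Set ℕ) (hτ : τ.Infinite) :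
    IsGδ {f : ↥(D.harmonicSet E w) | D.UnivOn P τ f.1} ∧
      Dense {f : ↥(D.harmonicSet E w) | D.UnivOn P τ f.1} := by
  classical
  by_cases hE : Nonempty E
  case neg =>
    have hfe : IsEmpty (D.Vert → E) :=
      ⟨fun f => hE ⟨f ⟨0, Classical.arbitrary (D.T 0)⟩⟩⟩
    have hsub : IsEmpty ↥(D.harmonicSet E w) := ⟨fun f => hfe.false f.1⟩
    have huniv : {f : ↥(D.harmonicSet E w) | D.UnivOn P τ f.1} = Set.univ :=
      Set.eq_univ_of_forall fun f => (hsub.false f).elim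
    rw [huniv]
    exact ⟨IsGδ.univ, dense_univ⟩
  case pos =>
  haveI := hE
  set es : ℕ → E := TopologicalSpace.denseSeq E with hesdef
  have hes : DenseRange es := TopologicalSpace.denseRange_denseSeq E
  have hHmeas : ∀ j : Σ m : ℕ, (D.T m → ℕ),
      Measurable (fun e : D.Boundary => es (j.2 (e.1 j.1))) :=
    fun j => TreeData.measurable_level j.1 (fun x => es (j.2 x))
  have happrox : ∀ (h : D.Boundary → E), Measurable h → ∀ ε : ℝ, 0 < ε →
      ∃ j : Σ m : ℕ, (D.T m → ℕ),
        D.dP P (fun e => es (j.2 (e.1 j.1))) h < ε := by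
    intro h hh ε hε
    obtain ⟨m, σ, hσ⟩ := TreeData.exists_level_approx P es hes h hh hε
    exact ⟨⟨m, σ⟩, hσ⟩
  set V : (Σ m : ℕ, (D.T m → ℕ)) × ℕ → Set ↥(D.harmonicSet E w) := fun jk =>
    {f | ∃ n ∈ τ, D.dP P (D.omegaMap f.1 n)
      (fun e => es (jk.1.2 (e.1 jk.1.1))) < 1/((jk.2 : ℝ)+1)} with hV
  have hUeq : {f : ↥(D.harmonicSet E w) | D.UnivOn P τ f.1} = ⋂ jk, V jk := by
    ext f
    simp only [Set.mem_setOf_eq, Set.mem_iInter]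
    constructor
    · intro hU jk
      exact hU _ (hHmeas jk.1) (1/((jk.2 : ℝ)+1)) (by positivity)
    · intro hVf h hh ε hε
      obtain ⟨j, hj⟩ := happrox h hh (ε/2) (by linarith)
      obtain ⟨kk, hkk⟩ := exists_nat_one_div_lt (show (0:ℝ) < ε/2 by linarith)
      obtain ⟨n, hnτ, hn⟩ := hVf (j, kk)
      refine ⟨n, hnτ, ?_⟩
      have htri := TreeData.dP_triangle P (TreeData.measurable_omegaMap f.1 n)
        (hHmeas j) hh
      have hkk' : (1:ℝ)/((kk:ℝ)+1) < ε/2 := hkk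
      linarith
  have hVopen : ∀ jk, IsOpen (V jk) := by
    rintro ⟨j, kk⟩
    have hVeq : V (j, kk) = Subtype.val ⁻¹' (⋃ n ∈ τ,
        {f : D.Vert → E | D.dP P (D.omegaMap f n)
          (fun e => es (j.2 (e.1 j.1))) < 1/((kk : ℝ)+1)}) := by
      ext f
      simp only [hV, Set.mem_setOf_eq, Set.mem_preimage, Set.mem_iUnion,
        exists_prop]
    rw [hVeq]
    apply IsOpen.preimage continuous_subtype_val
    apply isOpen_biUnion
    intro n _
    rw [isOpen_iff_mem_nhds]
    intro f hf
    simp only [Set.mem_setOf_eq] at hf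
    set c := 1/((kk : ℝ)+1) - D.dP P (D.omegaMap f n) (fun e => es (j.2 (e.1 j.1))) with hc
    have hcpos : 0 < c := sub_pos.mpr hf
    have hNbopen : IsOpen {f' : D.Vert → E |
        ∀ x : D.T n, f' ⟨n, x⟩ ∈ Metric.ball (f ⟨n, x⟩) (c/2)} := by
      have heq : {f' : D.Vert → E | ∀ x : D.T n, f' ⟨n, x⟩ ∈ Metric.ball (f ⟨n, x⟩) (c/2)}
          = ⋂ x : D.T n, (fun f' : D.Vert → E => f' ⟨n, x⟩) ⁻¹'
            Metric.ball (f ⟨n, x⟩) (c/2) := by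
        ext f'
        simp only [Set.mem_setOf_eq, Set.mem_iInter, Set.mem_preimage]
      rw [heq]
      exact isOpen_iInter_of_finite fun x =>
        (continuous_apply (⟨n, x⟩ : D.Vert)).isOpen_preimage _ Metric.isOpen_ball
    apply Filter.mem_of_superset (hNbopen.mem_nhds ?_)
    · intro f' hf'
      simp only [Set.mem_setOf_eq] at hf' ⊢
      have h1 : D.dP P (D.omegaMap f' n) (D.omegaMap f n) ≤ c/2 := by
        apply TreeData.dP_le_const P (TreeData.measurable_omegaMap _ _)
          (TreeData.measurable_omegaMap _ _)
        intro e
        have hd : dist (D.omegaMap f' n e) (D.omegaMap f n e) < c/2 := hf' (e.1 n)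
        have hp := phi_le_self'
          (dist_nonneg (x := D.omegaMap f' n e) (y := D.omegaMap f n e))
        linarith
      have h2 := TreeData.dP_triangle P (TreeData.measurable_omegaMap f' n)
        (TreeData.measurable_omegaMap f n) (hHmeas j)
      have h3 : D.dP P (D.omegaMap f n) (fun e => es (j.2 (e.1 j.1)))
          = 1/((kk : ℝ)+1) - c := by rw [hc]; ring
      linarith
    · intro x
      simp only [Set.mem_setOf_eq, Metric.mem_ball, dist_self]
      positivity
  constructor
  · rw [hUeq]
    exact IsGδ.iInter fun jk => (hVopen jk).isGδ
  · rw [dense_iff_inter_open]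
    intro O hO hOne
    obtain ⟨g₀, hg₀⟩ := hOne
    obtain ⟨O', hO'open, rfl⟩ := isOpen_induced_iff.mp hO
    have hg₀O' : (g₀ : D.Vert → E) ∈ O' := hg₀
    obtain ⟨I, u, hu, hIsub⟩ := isOpen_pi_iff.mp hO'open g₀.1 hg₀O'
    set N₀ : ℕ := I.sup (fun p => p.1) with hN₀
    haveI : Nonempty ((Σ m : ℕ, (D.T m → ℕ)) × ℕ) := ⟨⟨⟨0, fun _ => 0⟩, 0⟩⟩
    obtain ⟨ρ, hρ⟩ := exists_surjective_nat ((Σ m : ℕ, (D.T m → ℕ)) × ℕ)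
    have hstep : ∀ (s : ℕ) (p : (D.Vert → E) × ℕ), D.Harmonic w p.1 →
        ∃ p' : (D.Vert → E) × ℕ, D.Harmonic w p'.1 ∧ p'.2 ∈ τ ∧ p.2 < p'.2 ∧
          (∀ i, i ≤ p.2 → ∀ x : D.T i, p'.1 ⟨i,x⟩ = p.1 ⟨i,x⟩) ∧
          D.dP P (D.omegaMap p'.1 p'.2)
            (fun e => es ((ρ s).1.2 (e.1 (ρ s).1.1))) < 1/(((ρ s).2 : ℝ)+1) := by
      intro s p hp
      obtain ⟨f, n, hf, hnτ, hn, hagree, hdp⟩ := TreeData.onestep w q hw hq0 hq1 P hP τ hτ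
        hp p.2 (ρ s).1.1 (fun x => es ((ρ s).1.2 x)) (ε := 1/(((ρ s).2 : ℝ)+1))
        (by positivity)
      exact ⟨(f, n), hf, hnτ, hn, hagree, hdp⟩
    set F : ℕ → {p : (D.Vert → E) × ℕ // D.Harmonic w p.1} := fun s =>
      Nat.rec ⟨(g₀.1, N₀), g₀.2⟩
        (fun s ih => ⟨Classical.choose (hstep s ih.1 ih.2),
          (Classical.choose_spec (hstep s ih.1 ih.2)).1⟩) s with hFdef
    have hF : ∀ s, (F (s+1)).1.2 ∈ τ ∧ (F s).1.2 < (F (s+1)).1.2 ∧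
        (∀ i, i ≤ (F s).1.2 → ∀ x : D.T i, (F (s+1)).1.1 ⟨i,x⟩ = (F s).1.1 ⟨i,x⟩) ∧
        D.dP P (D.omegaMap (F (s+1)).1.1 (F (s+1)).1.2)
          (fun e => es ((ρ s).1.2 (e.1 (ρ s).1.1))) < 1/(((ρ s).2 : ℝ)+1) :=
      fun s => (Classical.choose_spec (hstep s (F s).1 (F s).2)).2
    have hNmono : ∀ s s', s ≤ s' → (F s).1.2 ≤ (F s').1.2 :=
      fun s s' hss => (strictMono_nat_of_lt_succ (fun s => (hF s).2.1)).monotone hss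
    have hNge : ∀ s, s ≤ (F s).1.2 := by
      intro s
      induction s with
      | zero => exact Nat.zero_le _
      | succ s ih =>
          have := (hF s).2.1
          omega
    have hagree : ∀ s s', s ≤ s' → ∀ i, i ≤ (F s).1.2 → ∀ x : D.T i,
        (F s').1.1 ⟨i,x⟩ = (F s).1.1 ⟨i,x⟩ := by
      intro s s' hss
      induction s' with
      | zero =>
          have hs0 : s = 0 := Nat.le_zero.mp hss
          subst hs0
          intro i hi x
          rfl
      | succ s' ih =>
          by_cases hs : s = s'+1
          · subst hs
            intro i hi x
            rfl
          · have hss' : s ≤ s' := by omega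
            intro i hi x
            rw [(hF s').2.2.1 i (le_trans hi (hNmono s s' hss')) x, ih hss' i hi x]
    set Ff : D.Vert → E := fun p => (F p.1).1.1 p with hFf
    have hFfstab : ∀ s i, i ≤ (F s).1.2 → ∀ x : D.T i, Ff ⟨i,x⟩ = (F s).1.1 ⟨i,x⟩ := by
      intro s i hi x
      rcases le_total s i with h | h
      · exact hagree s i h i hi x
      · exact (hagree i s h i (hNge i) x).symm
    have hFfharm : D.Harmonic w Ff := by
      intro i x
      have h1 : Ff ⟨i,x⟩ = (F (i+1)).1.1 ⟨i,x⟩ :=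
        hFfstab (i+1) i (by have := hNge (i+1); omega) x
      rw [h1, (F (i+1)).2 i x]
    have hFfO : Ff ∈ O' := by
      apply hIsub
      intro p hp
      have hval : Ff p = g₀.1 p := by
        have hlev : p.1 ≤ N₀ := Finset.le_sup (f := fun p : D.Vert => p.1) hp
        exact hFfstab 0 p.1 hlev p.2
      rw [hval]
      exact (hu p hp).2
    have hFfU : D.UnivOn P τ Ff := by
      intro h hh ε hε
      obtain ⟨j, hj⟩ := happrox h hh (ε/2) (by linarith)
      obtain ⟨kk, hkk⟩ := exists_nat_one_div_lt (show (0:ℝ) < ε/2 by linarith)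
      obtain ⟨s, hs⟩ := hρ (j, kk)
      refine ⟨(F (s+1)).1.2, (hF s).1, ?_⟩
      have hs1 : (ρ s).1 = j := by rw [hs]
      have hs2 : (ρ s).2 = kk := by rw [hs]
      have hdp := (hF s).2.2.2
      rw [hs1, hs2] at hdp
      have homega : D.omegaMap Ff (F (s+1)).1.2
          = D.omegaMap (F (s+1)).1.1 (F (s+1)).1.2 := by
        funext e
        exact hFfstab (s+1) (F (s+1)).1.2 le_rfl (e.1 _)
      have htri := TreeData.dP_triangle P
        (TreeData.measurable_omegaMap Ff (F (s+1)).1.2) (hHmeas j) hh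
      rw [homega] at htri
      have hgoal : D.dP P (D.omegaMap Ff (F (s+1)).1.2) h
          = D.dP P (D.omegaMap (F (s+1)).1.1 (F (s+1)).1.2) h := by rw [homega]
      rw [hgoal]
      have hkk' : (1:ℝ)/((kk:ℝ)+1) < ε/2 := hkk
      linarith
    exact ⟨⟨Ff, hFfharm⟩, ⟨hFfO, hFfU⟩⟩
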